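/- Let (L, T_L, w_L, B) be a WSC and let (K₀, T₀, w₀, A₀), (K₁, T₁, w₁, A₁), (K₂, T₂, w₂, A₂) be weighted subcomplexes of (L, T_L, w_L, B) such that: the edge sets satisfy E(K₁) ∪ E(K₂) = E(L) and E(K₁) ∩ E(K₂) = E(K₀), the 2-simplex sets satisfy T₁ ∪ T₂ = T_L and T₁ ∩ T₂ = T₀, and (K₀, T₀, w₀, A₀) is a weighted subcomplex of both (K₁, T₁, w₁, A₁) and (K₂, T₂, w₂, A₂). Let i₁₊ : π₁(K₀, w₀, A₀) → π₁(K₁, w₁, A₁) and i₂₊ : π₁(K₀, w₀, A₀) → π₁(K₂, w₂, A₂) be the induced homomorphisms sending each generator g_{ab} to the generator g_{ab}. Then π₁(L, w_L, B) is isomorphic to the quotient of the free product π₁(K₁, w₁, A₁) ∗ π₁(K₂, w₂, A₂) (Monoid.Coprod) by the normal closure of the set { inl(i₁₊(α)) · inr(i₂₊(α))⁻¹ : α ∈ π₁(K₀, w₀, A₀) }, i.e. to the free product with amalgamation of π₁(K₁, w₁, A₁) and π₁(K₂, w₂, A₂) over π₁(K₀, w₀, A₀). -/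

import Mathlib

open scoped Classical

variable {V : Type*}

/-- Generators of the weighted fundamental group: edges `ab` of `K` with `a < b`. -/
def WGen [LinearOrder V] (K : SimpleGraph V) : Type _ :=
  {p : V × V // p.1 < p.2 ∧ K.Adj p.1 p.2}

/-- The relators of the weighted fundamental group: (1) `g_{ab}^{w(ab)}` for edges of the
spanning tree `A`; (2) `g_{ab}^{w(ab)} · (g_{av}^{w(av)} · g_{vb}^{w(vb)})⁻¹` for 2-simplices
`{a, v, b} ∈ T` with `a < v < b`. -/
def WRelators [LinearOrder V] (K : SimpleGraph V) (T : Set (Finset V))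
    (w : Sym2 V → ℤ) (A : SimpleGraph V) : Set (FreeGroup (WGen K)) :=
  {r | ∃ e : WGen K, A.Adj e.1.1 e.1.2 ∧ r = FreeGroup.of e ^ w s(e.1.1, e.1.2)} ∪
  {r | ∃ (a v b : V) (hav : a < v) (hvb : v < b)
       (h1 : K.Adj a v) (h2 : K.Adj v b) (h3 : K.Adj a b),
       ({a, v, b} : Finset V) ∈ T ∧
       r = FreeGroup.of (⟨(a, b), hav.trans hvb, h3⟩ : WGen K) ^ w s(a, b) *
         (FreeGroup.of (⟨(a, v), hav, h1⟩ : WGen K) ^ w s(a, v) *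
          FreeGroup.of (⟨(v, b), hvb, h2⟩ : WGen K) ^ w s(v, b))⁻¹}

/-- The weighted fundamental group `π₁(K, w, A)` of the WSC `(K, T, w, A)`,
as a presented group. -/
def wpi1 [LinearOrder V] (K : SimpleGraph V) (T : Set (Finset V))
    (w : Sym2 V → ℤ) (A : SimpleGraph V) : Type _ :=
  PresentedGroup (WRelators K T w A)

noncomputable instance [LinearOrder V] (K : SimpleGraph V) (T : Set (Finset V))
    (w : Sym2 V → ℤ) (A : SimpleGraph V) : Group (wpi1 K T w A) := by
  unfold wpi1; infer_instance

/-- `(K, T, w, A)` is a weighted simplicial complex: `K` is a connected simple graph,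
`T` is a set of 2-simplices (unordered triples of distinct pairwise adjacent vertices),
and `A` is a spanning tree of `K`. -/
structure IsWSC (K : SimpleGraph V) (T : Set (Finset V))
    (w : Sym2 V → ℤ) (A : SimpleGraph V) : Prop where
  conn : K.Connected
  tri : ∀ t ∈ T, ∃ a v b : V, a ≠ v ∧ v ≠ b ∧ a ≠ b ∧ t = {a, v, b} ∧
        K.Adj a v ∧ K.Adj v b ∧ K.Adj a b
  tree : A.IsTree
  le : A ≤ K

/-- Exactly two of the three edges of every 2-simplex of `T` lie in the tree `A`. -/
def ExactlyTwo [LinearOrder V] (T : Set (Finset V)) (A : SimpleGraph V) : Prop :=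
  ∀ a v b : V, a < v → v < b → ({a, v, b} : Finset V) ∈ T →
    ((if A.Adj a b then 1 else 0) + (if A.Adj a v then 1 else 0) +
      (if A.Adj v b then 1 else 0) : ℕ) = 2

/-- `(K, TK, wK, A)` is a weighted subcomplex of `(L, TL, wL, B)`. -/
structure IsWSubcomplex (K : SimpleGraph V) (TK : Set (Finset V)) (wK : Sym2 V → ℤ)
    (A : SimpleGraph V) (L : SimpleGraph V) (TL : Set (Finset V)) (wL : Sym2 V → ℤ)
    (B : SimpleGraph V) : Prop where
  graph_le : K ≤ L
  tri_subset : TK ⊆ TL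
  weight_agree : ∀ a b : V, K.Adj a b → wK s(a, b) = wL s(a, b)
  tree_le : A ≤ B

section AuxVK

/-- A spanning tree contained in another spanning tree equals it. -/
lemma tree_le_eq_aux {A B : SimpleGraph V} (hA : A.IsTree) (hB : B.IsTree) (hle : A ≤ B) :
    A = B := by
  ext a b
  refine ⟨fun h => hle h, fun hab => ?_⟩
  by_contra hn
  obtain ⟨w⟩ := hA.isConnected.preconnected b a
  let p : A.Path b a := w.toPath
  have hq : ((p : A.Walk b a).mapLe hle).IsPath :=
    (SimpleGraph.Walk.mapLe_isPath hle).mpr p.2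
  have he : s(a, b) ∉ ((p : A.Walk b a).mapLe hle).edges := by
    intro hmem
    rw [SimpleGraph.Walk.mapLe, SimpleGraph.Walk.edges_map] at hmem
    simp only [List.mem_map] at hmem
    obtain ⟨e, he', heq⟩ := hmem
    have heq' : e = s(a, b) := by
      rw [← heq]
      induction e using Sym2.ind
      rfl
    subst heq'
    exact hn ((p : A.Walk b a).edges_subset_edgeSet he')
  exact hB.IsAcyclic _ (SimpleGraph.Path.cons_isCycle ⟨_, hq⟩ hab he)

lemma adj_of_mem_tri_aux {K : SimpleGraph V} {a v b x y : V}
    (h1 : K.Adj a v) (h2 : K.Adj v b) (h3 : K.Adj a b)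
    (hx : x = a ∨ x = v ∨ x = b) (hy : y = a ∨ y = v ∨ y = b) (hxy : x ≠ y) :
    K.Adj x y := by
  rcases hx with rfl | rfl | rfl <;> rcases hy with rfl | rfl | rfl <;>
    first
      | exact absurd rfl hxy
      | assumption
      | exact h1.symm
      | exact h2.symm
      | exact h3.symm

lemma IsWSC.adj_of_tri [DecidableEq V] {K : SimpleGraph V} {T : Set (Finset V)} {w : Sym2 V → ℤ}
    {A : SimpleGraph V} (h : IsWSC K T w A) {a v b x y : V}
    (ht : ({a, v, b} : Finset V) ∈ T)
    (hx : x = a ∨ x = v ∨ x = b) (hy : y = a ∨ y = v ∨ y = b) (hxy : x ≠ y) :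
    K.Adj x y := by
  obtain ⟨a', v', b', _, _, _, teq, h1, h2, h3⟩ := h.tri _ ht
  have key : ∀ z : V, z = a ∨ z = v ∨ z = b → z = a' ∨ z = v' ∨ z = b' := by
    intro z hz
    have hz' : z ∈ ({a, v, b} : Finset V) := by
      simp only [Finset.mem_insert, Finset.mem_singleton]; exact hz
    rw [teq] at hz'
    simpa only [Finset.mem_insert, Finset.mem_singleton] using hz'
  exact adj_of_mem_tri_aux h1 h2 h3 (key x hx) (key y hy) hxy

lemma pg_mk_rel_one {α : Type*} {rels : Set (FreeGroup α)} {r : FreeGroup α}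
    (h : r ∈ rels) : (PresentedGroup.mk rels) r = 1 :=
  (QuotientGroup.eq_one_iff r).mpr (Subgroup.subset_normalClosure h)

lemma pg_of_zpow_eq_one {α : Type*} {rels : Set (FreeGroup α)} {x : α} {n : ℤ}
    (h : FreeGroup.of x ^ n ∈ rels) :
    (PresentedGroup.of x : PresentedGroup rels) ^ n = 1 := by
  have := pg_mk_rel_one h
  rwa [map_zpow] at this

lemma pg_of_tri_eq_one {α : Type*} {rels : Set (FreeGroup α)} {x y z : α} {m n k : ℤ}
    (h : FreeGroup.of x ^ m * (FreeGroup.of y ^ n * FreeGroup.of z ^ k)⁻¹ ∈ rels) :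
    (PresentedGroup.of x : PresentedGroup rels) ^ m *
      ((PresentedGroup.of y : PresentedGroup rels) ^ n *
        (PresentedGroup.of z : PresentedGroup rels) ^ k)⁻¹ = 1 := by
  have := pg_mk_rel_one h
  rwa [map_mul, map_inv, map_mul, map_zpow, map_zpow, map_zpow] at this

end AuxVK

/-- Weighted van Kampen Theorem, Theorem 4.9. `π₁(L, w_L, B)` is the free
product of `π₁(K₁, w₁, A₁)` and `π₁(K₂, w₂, A₂)` amalgamated over `π₁(K₀, w₀, A₀)`, i.e. the
quotient of `Monoid.Coprod` by the normal closure of `{inl(i₁ α) · inr(i₂ α)⁻¹}`. -/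
theorem weighted_van_kampen [LinearOrder V]
    (L : SimpleGraph V) (TL : Set (Finset V)) (wL : Sym2 V → ℤ) (B : SimpleGraph V)
    (K₀ K₁ K₂ : SimpleGraph V) (T₀ T₁ T₂ : Set (Finset V)) (w₀ w₁ w₂ : Sym2 V → ℤ)
    (A₀ A₁ A₂ : SimpleGraph V)
    (hL : IsWSC L TL wL B) (h₀ : IsWSC K₀ T₀ w₀ A₀) (h₁ : IsWSC K₁ T₁ w₁ A₁)
    (h₂ : IsWSC K₂ T₂ w₂ A₂)
    (hsub₁ : IsWSubcomplex K₁ T₁ w₁ A₁ L TL wL B)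
    (hsub₂ : IsWSubcomplex K₂ T₂ w₂ A₂ L TL wL B)
    (hsub₀₁ : IsWSubcomplex K₀ T₀ w₀ A₀ K₁ T₁ w₁ A₁)
    (hsub₀₂ : IsWSubcomplex K₀ T₀ w₀ A₀ K₂ T₂ w₂ A₂)
    (hEunion : K₁ ⊔ K₂ = L) (hEinter : K₁ ⊓ K₂ = K₀)
    (hTunion : T₁ ∪ T₂ = TL) (hTinter : T₁ ∩ T₂ = T₀)
    (i₁ : wpi1 K₀ T₀ w₀ A₀ →* wpi1 K₁ T₁ w₁ A₁)
    (i₂ : wpi1 K₀ T₀ w₀ A₀ →* wpi1 K₂ T₂ w₂ A₂)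
    (hi₁ : ∀ e : WGen K₀, i₁ (PresentedGroup.of e) =
      PresentedGroup.of (⟨e.1, e.2.1, hsub₀₁.graph_le e.2.2⟩ : WGen K₁))
    (hi₂ : ∀ e : WGen K₀, i₂ (PresentedGroup.of e) =
      PresentedGroup.of (⟨e.1, e.2.1, hsub₀₂.graph_le e.2.2⟩ : WGen K₂)) :
    Nonempty (wpi1 L TL wL B ≃*
      (Monoid.Coprod (wpi1 K₁ T₁ w₁ A₁) (wpi1 K₂ T₂ w₂ A₂)) ⧸
        Subgroup.normalClosure
          {x | ∃ α : wpi1 K₀ T₀ w₀ A₀,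
            x = Monoid.Coprod.inl (i₁ α) * (Monoid.Coprod.inr (i₂ α))⁻¹}) := by
  classical
  -- all spanning trees coincide
  have eA1 : A₀ = A₁ := tree_le_eq_aux h₀.tree h₁.tree hsub₀₁.tree_le
  have eA2 : A₀ = A₂ := tree_le_eq_aux h₀.tree h₂.tree hsub₀₂.tree_le
  have eB1 : A₁ = B := tree_le_eq_aux h₁.tree hL.tree hsub₁.tree_le
  have hK01 : K₀ ≤ K₁ := hsub₀₁.graph_le
  have hK02 : K₀ ≤ K₂ := hsub₀₂.graph_le
  have hK1L : K₁ ≤ L := hsub₁.graph_le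
  have hK2L : K₂ ≤ L := hsub₂.graph_le
  have hLadj : ∀ {a b : V}, L.Adj a b → K₁.Adj a b ∨ K₂.Adj a b := by
    intro a b h; rw [← hEunion] at h; exact h
  have hK0adj : ∀ {a b : V}, K₁.Adj a b → K₂.Adj a b → K₀.Adj a b := by
    intro a b h1 h2; rw [← hEinter]; exact ⟨h1, h2⟩
  have hw1 : ∀ {a b : V}, K₁.Adj a b → wL s(a, b) = w₁ s(a, b) :=
    fun h => (hsub₁.weight_agree _ _ h).symm
  have hw2 : ∀ {a b : V}, K₂.Adj a b → wL s(a, b) = w₂ s(a, b) :=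
    fun h => (hsub₂.weight_agree _ _ h).symm
  set S : Set (Monoid.Coprod (wpi1 K₁ T₁ w₁ A₁) (wpi1 K₂ T₂ w₂ A₂)) :=
    {x | ∃ α : wpi1 K₀ T₀ w₀ A₀,
      x = Monoid.Coprod.inl (i₁ α) * (Monoid.Coprod.inr (i₂ α))⁻¹} with hS
  set N := Subgroup.normalClosure S with hNdef
  let π : Monoid.Coprod (wpi1 K₁ T₁ w₁ A₁) (wpi1 K₂ T₂ w₂ A₂) →*
      Monoid.Coprod (wpi1 K₁ T₁ w₁ A₁) (wpi1 K₂ T₂ w₂ A₂) ⧸ N := QuotientGroup.mk' N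
  -- the amalgamation relation in the quotient
  have key : ∀ e : WGen K₀,
      π (Monoid.Coprod.inl (PresentedGroup.of ⟨e.1, e.2.1, hK01 e.2.2⟩ : wpi1 K₁ T₁ w₁ A₁)) =
      π (Monoid.Coprod.inr (PresentedGroup.of ⟨e.1, e.2.1, hK02 e.2.2⟩ : wpi1 K₂ T₂ w₂ A₂)) := by
    intro e
    have hmem : Monoid.Coprod.inl (i₁ (PresentedGroup.of e)) *
        (Monoid.Coprod.inr (i₂ (PresentedGroup.of e)))⁻¹ ∈ N :=
      Subgroup.subset_normalClosure ⟨PresentedGroup.of e, rfl⟩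
    have h1 : π (Monoid.Coprod.inl (i₁ (PresentedGroup.of e)) *
        (Monoid.Coprod.inr (i₂ (PresentedGroup.of e)))⁻¹) = 1 :=
      (QuotientGroup.eq_one_iff _).mpr hmem
    rw [map_mul, map_inv, mul_inv_eq_one, hi₁, hi₂] at h1
    exact h1
  -- the generator map for the forward homomorphism
  let f : WGen L → Monoid.Coprod (wpi1 K₁ T₁ w₁ A₁) (wpi1 K₂ T₂ w₂ A₂) ⧸ N := fun e =>
    if h : K₁.Adj e.1.1 e.1.2 then
      π (Monoid.Coprod.inl (PresentedGroup.of (⟨e.1, e.2.1, h⟩ : WGen K₁)))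
    else
      π (Monoid.Coprod.inr (PresentedGroup.of
        (⟨e.1, e.2.1, (hLadj e.2.2).resolve_left h⟩ : WGen K₂)))
  have hf1 : ∀ (e : WGen L) (h : K₁.Adj e.1.1 e.1.2),
      f e = π (Monoid.Coprod.inl (PresentedGroup.of (⟨e.1, e.2.1, h⟩ : WGen K₁))) := by
    intro e h; simp only [f, dif_pos h]
  have hf2 : ∀ (e : WGen L) (h : K₂.Adj e.1.1 e.1.2),
      f e = π (Monoid.Coprod.inr (PresentedGroup.of (⟨e.1, e.2.1, h⟩ : WGen K₂))) := by
    intro e h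
    by_cases h1 : K₁.Adj e.1.1 e.1.2
    · rw [hf1 e h1]
      exact key ⟨e.1, e.2.1, hK0adj h1 h⟩
    · simp only [f, dif_neg h1]
  -- the relators of L are killed
  have hrelL : ∀ r ∈ WRelators L TL wL B, FreeGroup.lift f r = 1 := by
    rintro r hr
    rcases hr with ⟨e, hBe, rfl⟩ | ⟨a, v, b, hav, hvb, hav1, hvb1, hab1, hT, rfl⟩
    · have hA0 : A₀.Adj e.1.1 e.1.2 := by rw [eA1, eB1]; exact hBe
      have hA1 : A₁.Adj e.1.1 e.1.2 := by rw [← eB1] at hBe; exact hBe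
      have hK1 : K₁.Adj e.1.1 e.1.2 := hK01 (h₀.le hA0)
      have hrel : (PresentedGroup.of (⟨e.1, e.2.1, hK1⟩ : WGen K₁) :
          wpi1 K₁ T₁ w₁ A₁) ^ w₁ s(e.1.1, e.1.2) = 1 :=
        pg_of_zpow_eq_one (Set.mem_union_left _ ⟨⟨e.1, e.2.1, hK1⟩, hA1, rfl⟩)
      have h' := congrArg (π.comp (Monoid.Coprod.inl)) hrel
      erw [map_zpow, map_one, MonoidHom.comp_apply] at h'
      erw [map_zpow, FreeGroup.lift_apply_of, hf1 e hK1, hw1 hK1]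
      exact h'
    · have hT' : ({a, v, b} : Finset V) ∈ T₁ ∪ T₂ := by rw [hTunion]; exact hT
      rcases hT' with ht | ht
      · have hav' : K₁.Adj a v := h₁.adj_of_tri ht (Or.inl rfl) (Or.inr (Or.inl rfl)) hav.ne
        have hvb' : K₁.Adj v b := h₁.adj_of_tri ht (Or.inr (Or.inl rfl)) (Or.inr (Or.inr rfl)) hvb.ne
        have hab' : K₁.Adj a b := h₁.adj_of_tri ht (Or.inl rfl) (Or.inr (Or.inr rfl)) (hav.trans hvb).ne
        have hrel : (PresentedGroup.of (⟨(a, b), hav.trans hvb, hab'⟩ : WGen K₁) :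
              wpi1 K₁ T₁ w₁ A₁) ^ w₁ s(a, b) *
            ((PresentedGroup.of (⟨(a, v), hav, hav'⟩ : WGen K₁) :
              wpi1 K₁ T₁ w₁ A₁) ^ w₁ s(a, v) *
             (PresentedGroup.of (⟨(v, b), hvb, hvb'⟩ : WGen K₁) :
              wpi1 K₁ T₁ w₁ A₁) ^ w₁ s(v, b))⁻¹ = 1 :=
          pg_of_tri_eq_one (Set.mem_union_right _
            ⟨a, v, b, hav, hvb, hav', hvb', hab', ht, rfl⟩)
        have h' := congrArg (π.comp (Monoid.Coprod.inl)) hrel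
        erw [map_mul, map_inv, map_mul, map_zpow, map_zpow, map_zpow, map_one, MonoidHom.comp_apply, MonoidHom.comp_apply, MonoidHom.comp_apply] at h'
        erw [map_mul, map_inv, map_mul, map_zpow, map_zpow, map_zpow,
          FreeGroup.lift_apply_of, FreeGroup.lift_apply_of, FreeGroup.lift_apply_of,
          hf1 _ hab', hf1 _ hav', hf1 _ hvb', hw1 hab', hw1 hav', hw1 hvb']
        exact h'
      · have hav' : K₂.Adj a v := h₂.adj_of_tri ht (Or.inl rfl) (Or.inr (Or.inl rfl)) hav.ne
        have hvb' : K₂.Adj v b := h₂.adj_of_tri ht (Or.inr (Or.inl rfl)) (Or.inr (Or.inr rfl)) hvb.ne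
        have hab' : K₂.Adj a b := h₂.adj_of_tri ht (Or.inl rfl) (Or.inr (Or.inr rfl)) (hav.trans hvb).ne
        have hrel : (PresentedGroup.of (⟨(a, b), hav.trans hvb, hab'⟩ : WGen K₂) :
              wpi1 K₂ T₂ w₂ A₂) ^ w₂ s(a, b) *
            ((PresentedGroup.of (⟨(a, v), hav, hav'⟩ : WGen K₂) :
              wpi1 K₂ T₂ w₂ A₂) ^ w₂ s(a, v) *
             (PresentedGroup.of (⟨(v, b), hvb, hvb'⟩ : WGen K₂) :
              wpi1 K₂ T₂ w₂ A₂) ^ w₂ s(v, b))⁻¹ = 1 :=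
          pg_of_tri_eq_one (Set.mem_union_right _
            ⟨a, v, b, hav, hvb, hav', hvb', hab', ht, rfl⟩)
        have h' := congrArg (π.comp (Monoid.Coprod.inr)) hrel
        erw [map_mul, map_inv, map_mul, map_zpow, map_zpow, map_zpow, map_one, MonoidHom.comp_apply, MonoidHom.comp_apply, MonoidHom.comp_apply] at h'
        erw [map_mul, map_inv, map_mul, map_zpow, map_zpow, map_zpow,
          FreeGroup.lift_apply_of, FreeGroup.lift_apply_of, FreeGroup.lift_apply_of,
          hf2 _ hab', hf2 _ hav', hf2 _ hvb', hw2 hab', hw2 hav', hw2 hvb']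
        exact h'
  let φ0 : wpi1 L TL wL B →*
      Monoid.Coprod (wpi1 K₁ T₁ w₁ A₁) (wpi1 K₂ T₂ w₂ A₂) ⧸ N :=
    PresentedGroup.toGroup hrelL
  -- the backward homomorphisms
  have hrel1 : ∀ r ∈ WRelators K₁ T₁ w₁ A₁,
      FreeGroup.lift (fun e : WGen K₁ =>
        (PresentedGroup.of ⟨e.1, e.2.1, hK1L e.2.2⟩ : wpi1 L TL wL B)) r = 1 := by
    rintro r hr
    rcases hr with ⟨e, hAe, rfl⟩ | ⟨a, v, b, hav, hvb, h1', h2', h3', hT, rfl⟩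
    · have hB : B.Adj e.1.1 e.1.2 := by rw [← eB1]; exact hAe
      rw [map_zpow, FreeGroup.lift_apply_of, ← hw1 e.2.2]
      exact pg_of_zpow_eq_one (Set.mem_union_left _ ⟨⟨e.1, e.2.1, hK1L e.2.2⟩, hB, rfl⟩)
    · erw [map_mul, map_inv, map_mul, map_zpow, map_zpow, map_zpow,
        FreeGroup.lift_apply_of, FreeGroup.lift_apply_of, FreeGroup.lift_apply_of,
        ← hw1 h3', ← hw1 h1', ← hw1 h2']
      exact pg_of_tri_eq_one (Set.mem_union_right _
        ⟨a, v, b, hav, hvb, hK1L h1', hK1L h2', hK1L h3', hsub₁.tri_subset hT, rfl⟩)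
  have hrel2 : ∀ r ∈ WRelators K₂ T₂ w₂ A₂,
      FreeGroup.lift (fun e : WGen K₂ =>
        (PresentedGroup.of ⟨e.1, e.2.1, hK2L e.2.2⟩ : wpi1 L TL wL B)) r = 1 := by
    rintro r hr
    rcases hr with ⟨e, hAe, rfl⟩ | ⟨a, v, b, hav, hvb, h1', h2', h3', hT, rfl⟩
    · have hB : B.Adj e.1.1 e.1.2 := by
        rw [← eB1, ← eA1, eA2]; exact hAe
      rw [map_zpow, FreeGroup.lift_apply_of, ← hw2 e.2.2]
      exact pg_of_zpow_eq_one (Set.mem_union_left _ ⟨⟨e.1, e.2.1, hK2L e.2.2⟩, hB, rfl⟩)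
    · erw [map_mul, map_inv, map_mul, map_zpow, map_zpow, map_zpow,
        FreeGroup.lift_apply_of, FreeGroup.lift_apply_of, FreeGroup.lift_apply_of,
        ← hw2 h3', ← hw2 h1', ← hw2 h2']
      exact pg_of_tri_eq_one (Set.mem_union_right _
        ⟨a, v, b, hav, hvb, hK2L h1', hK2L h2', hK2L h3', hsub₂.tri_subset hT, rfl⟩)
  let ψ₁ : wpi1 K₁ T₁ w₁ A₁ →* wpi1 L TL wL B := PresentedGroup.toGroup hrel1
  let ψ₂ : wpi1 K₂ T₂ w₂ A₂ →* wpi1 L TL wL B := PresentedGroup.toGroup hrel2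
  have hcomp : ψ₁.comp i₁ = ψ₂.comp i₂ := by
    apply PresentedGroup.ext
    intro e
    show ψ₁ (i₁ (PresentedGroup.of e)) = ψ₂ (i₂ (PresentedGroup.of e))
    have s1 : ψ₁ (i₁ (PresentedGroup.of e)) =
        (PresentedGroup.of ⟨e.1, e.2.1, hK1L (hsub₀₁.graph_le e.2.2)⟩ : wpi1 L TL wL B) :=
      (congrArg ψ₁ (hi₁ e)).trans (PresentedGroup.toGroup.of hrel1)
    have s2 : ψ₂ (i₂ (PresentedGroup.of e)) =
        (PresentedGroup.of ⟨e.1, e.2.1, hK2L (hsub₀₂.graph_le e.2.2)⟩ : wpi1 L TL wL B) :=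
      (congrArg ψ₂ (hi₂ e)).trans (PresentedGroup.toGroup.of hrel2)
    exact s1.trans s2.symm
  have hNker : N ≤ (Monoid.Coprod.lift ψ₁ ψ₂).ker := by
    apply Subgroup.normalClosure_le_normal
    rintro x ⟨α, rfl⟩
    have hα := DFunLike.congr_fun hcomp α
    simp only [MonoidHom.comp_apply] at hα
    simp only [SetLike.mem_coe, MonoidHom.mem_ker, map_mul, map_inv,
      Monoid.Coprod.lift_apply_inl, Monoid.Coprod.lift_apply_inr, hα, mul_inv_cancel]
  let ψ : (Monoid.Coprod (wpi1 K₁ T₁ w₁ A₁) (wpi1 K₂ T₂ w₂ A₂) ⧸ N) →* wpi1 L TL wL B :=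
    QuotientGroup.lift N (Monoid.Coprod.lift ψ₁ ψ₂) hNker
  have hψπ : ∀ x, ψ (π x) = Monoid.Coprod.lift ψ₁ ψ₂ x := fun x => rfl
  -- left inverse
  have hleft : ψ.comp φ0 = MonoidHom.id _ := by
    apply PresentedGroup.ext
    intro e
    show ψ (φ0 (PresentedGroup.of e)) = PresentedGroup.of e
    refine (congrArg ψ (PresentedGroup.toGroup.of hrelL)).trans ?_
    by_cases h : K₁.Adj e.1.1 e.1.2
    · refine (congrArg ψ (hf1 e h)).trans ?_
      refine (hψπ _).trans ?_
      refine (Monoid.Coprod.lift_apply_inl ψ₁ ψ₂ _).trans ?_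
      exact PresentedGroup.toGroup.of hrel1
    · refine (congrArg ψ (hf2 e ((hLadj e.2.2).resolve_left h))).trans ?_
      refine (hψπ _).trans ?_
      refine (Monoid.Coprod.lift_apply_inr ψ₁ ψ₂ _).trans ?_
      exact PresentedGroup.toGroup.of hrel2
  -- right inverse
  have hright : φ0.comp ψ = MonoidHom.id _ := by
    apply QuotientGroup.monoidHom_ext
    apply Monoid.Coprod.hom_ext
    · apply PresentedGroup.ext
      intro e
      show φ0 (ψ (π (Monoid.Coprod.inl (PresentedGroup.of e)))) =
        π (Monoid.Coprod.inl (PresentedGroup.of e))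
      have s1 : ψ (π (Monoid.Coprod.inl (PresentedGroup.of e))) =
          (PresentedGroup.of ⟨e.1, e.2.1, hK1L e.2.2⟩ : wpi1 L TL wL B) :=
        (hψπ _).trans ((Monoid.Coprod.lift_apply_inl ψ₁ ψ₂ _).trans
          (PresentedGroup.toGroup.of hrel1))
      refine (congrArg φ0 s1).trans ?_
      refine (PresentedGroup.toGroup.of hrelL).trans ?_
      exact hf1 ⟨e.1, e.2.1, hK1L e.2.2⟩ e.2.2
    · apply PresentedGroup.ext
      intro e
      show φ0 (ψ (π (Monoid.Coprod.inr (PresentedGroup.of e)))) =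
        π (Monoid.Coprod.inr (PresentedGroup.of e))
      have s1 : ψ (π (Monoid.Coprod.inr (PresentedGroup.of e))) =
          (PresentedGroup.of ⟨e.1, e.2.1, hK2L e.2.2⟩ : wpi1 L TL wL B) :=
        (hψπ _).trans ((Monoid.Coprod.lift_apply_inr ψ₁ ψ₂ _).trans
          (PresentedGroup.toGroup.of hrel2))
      refine (congrArg φ0 s1).trans ?_
      refine (PresentedGroup.toGroup.of hrelL).trans ?_
      exact hf2 ⟨e.1, e.2.1, hK2L e.2.2⟩ e.2.2
  exact ⟨{ toFun := φ0, invFun := ψ,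
           left_inv := fun x => DFunLike.congr_fun hleft x,
           right_inv := fun x => DFunLike.congr_fun hright x,
           map_mul' := map_mul φ0 }⟩
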